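/- Let A, K, S, z be as in the standing setup (S closed semiregular on A, S|_K regular with z-transform z ∈ M(K)). Then A ⊆ closure((1 - z*z)·A) and A ⊆ closure((1 - zz*)·A). -/

import Mathlib

section Helpers

variable {M : Type*} [CStarAlgebra M]

lemma pow_intertwine (z p q : M) (h : q * z = z * p) : ∀ n : ℕ, q ^ n * z = z * p ^ n := by
  intro n; induction n with
  | zero => simp
  | succ n ih => rw [pow_succ, pow_succ, mul_assoc, h, ← mul_assoc, ih, mul_assoc]

lemma aeval_intertwine (z p q : M) (h : q * z = z * p) (P : Polynomial ℝ) :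
    Polynomial.aeval q P * z = z * Polynomial.aeval p P := by
  induction P using Polynomial.induction_on' with
  | add f g hf hg => simp only [map_add, add_mul, mul_add, hf, hg]
  | monomial n c =>
      simp only [Polynomial.aeval_monomial]
      rw [mul_assoc, pow_intertwine z p q h n, ← mul_assoc, ← mul_assoc,
        ← Algebra.commutes c z]

lemma cfc_intertwine [Nontrivial M] (z p q : M) (hp : IsSelfAdjoint p) (hq : IsSelfAdjoint q)
    (h : q * z = z * p) (f : ℝ → ℝ) (hf : Continuous f) :
    cfc f q * z = z * cfc f p := by
  set R : ℝ := max ‖p‖ ‖q‖ with hRdef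
  have hsp : spectrum ℝ p ⊆ Set.Icc (-R) R := by
    intro x hx
    have h1 : ‖x‖ ≤ ‖p‖ := spectrum.norm_le_norm_of_mem hx
    have h2 := abs_le.mp ((Real.norm_eq_abs x ▸ h1).trans (le_max_left ‖p‖ ‖q‖))
    exact ⟨h2.1, h2.2⟩
  have hsq : spectrum ℝ q ⊆ Set.Icc (-R) R := by
    intro x hx
    have h1 : ‖x‖ ≤ ‖q‖ := spectrum.norm_le_norm_of_mem hx
    have h2 := abs_le.mp ((Real.norm_eq_abs x ▸ h1).trans (le_max_right ‖p‖ ‖q‖))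
    exact ⟨h2.1, h2.2⟩
  have key : ∀ ε : ℝ, 0 < ε → ‖cfc f q * z - z * cfc f p‖ ≤ ε * (‖z‖ + ‖z‖) := by
    intro ε hε
    obtain ⟨P, hP⟩ : ∃ P : Polynomial ℝ, ∀ x ∈ Set.Icc (-R) R, |f x - P.eval x| ≤ ε := by
      have h1 := polynomialFunctions_closure_eq_top (-R) R
      set fC : C(Set.Icc (-R) R, ℝ) := ⟨fun x => f x, hf.comp continuous_subtype_val⟩ with hfC
      have h2 : fC ∈ closure (polynomialFunctions (Set.Icc (-R) R) : Set C(Set.Icc (-R) R, ℝ)) := by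
        rw [← Subalgebra.topologicalClosure_coe, h1]; trivial
      obtain ⟨g, hg, hdist⟩ := Metric.mem_closure_iff.mp h2 ε hε
      rw [polynomialFunctions_coe] at hg
      obtain ⟨P, rfl⟩ := hg
      refine ⟨P, fun x hx => ?_⟩
      have := ContinuousMap.dist_apply_le_dist (f := fC)
        (g := Polynomial.toContinuousMapOnAlgHom (Set.Icc (-R) R) P) (⟨x, hx⟩ : Set.Icc (-R) R)
      rw [Real.dist_eq] at this
      exact le_of_lt (lt_of_le_of_lt this hdist)
    have e1 : cfc f q - Polynomial.aeval q P = cfc (fun x => f x - P.eval x) q := by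
      rw [cfc_sub f (fun x => P.eval x) q hf.continuousOn
        ((Polynomial.continuous P).continuousOn), cfc_polynomial P q]
    have e2 : Polynomial.aeval p P - cfc f p = -(cfc (fun x => f x - P.eval x) p) := by
      rw [cfc_sub f (fun x => P.eval x) p hf.continuousOn
        ((Polynomial.continuous P).continuousOn), cfc_polynomial P p]
      abel
    have n1 : ‖cfc (fun x => f x - P.eval x) q‖ ≤ ε :=
      norm_cfc_le hε.le (fun x hx => by simpa [Real.norm_eq_abs] using hP x (hsq hx))
    have n2 : ‖cfc (fun x => f x - P.eval x) p‖ ≤ ε :=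
      norm_cfc_le hε.le (fun x hx => by simpa [Real.norm_eq_abs] using hP x (hsp hx))
    have hD : cfc f q * z - z * cfc f p
        = (cfc f q - Polynomial.aeval q P) * z + z * (Polynomial.aeval p P - cfc f p) := by
      rw [sub_mul, mul_sub, aeval_intertwine z p q h P]; abel
    calc ‖cfc f q * z - z * cfc f p‖
        ≤ ‖(cfc f q - Polynomial.aeval q P) * z‖ + ‖z * (Polynomial.aeval p P - cfc f p)‖ := by
          rw [hD]; exact norm_add_le _ _
      _ ≤ ‖cfc f q - Polynomial.aeval q P‖ * ‖z‖ + ‖z‖ * ‖Polynomial.aeval p P - cfc f p‖ :=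
          add_le_add (norm_mul_le _ _) (norm_mul_le _ _)
      _ ≤ ε * ‖z‖ + ‖z‖ * ε := by
          rw [e1, e2]
          have n2' : ‖-(cfc (fun x => f x - P.eval x) p)‖ ≤ ε := by simpa using n2
          exact add_le_add (mul_le_mul_of_nonneg_right n1 (norm_nonneg z))
            (mul_le_mul_of_nonneg_left n2' (norm_nonneg z))
      _ = ε * (‖z‖ + ‖z‖) := by ring
  have hnorm : ‖cfc f q * z - z * cfc f p‖ ≤ 0 := by
    apply le_of_forall_pos_le_add
    intro ε hε
    have hδ : 0 < ε / (‖z‖ + ‖z‖ + 1) := by positivity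
    calc ‖cfc f q * z - z * cfc f p‖ ≤ (ε / (‖z‖ + ‖z‖ + 1)) * (‖z‖ + ‖z‖) := key _ hδ
      _ ≤ ε := by
          rw [div_mul_eq_mul_div, div_le_iff₀ (by positivity)]
          nlinarith [norm_nonneg z, hε.le]
      _ ≤ 0 + ε := by linarith
  rw [← sub_eq_zero]
  exact norm_le_zero_iff.mp hnorm

lemma sqrt_eq_cfc_real [PartialOrder M] [StarOrderedRing M] {a : M} (ha : 0 ≤ a) :
    CFC.sqrt a = cfc Real.sqrt a := by
  rw [CFC.sqrt_eq_cfc, cfc_nnreal_eq_real _ a ha]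
  exact cfc_congr fun x _ => by rw [Real.sqrt]

end Helpers


/-- A densely defined operator on a C*-subalgebra `A` of an ambient unital C*-algebra `M`
(playing the role of `M(K)`).  It is presented by a total function `toFun` whose
meaningful values are those on its domain `dom ⊆ A`, which is a dense right ideal of `A`
on which the operator is `ℂ`-linear and right `A`-linear. -/
structure AmbientOp (M : Type*) [CStarAlgebra M] (A : Set M) where
  dom : Set M
  toFun : M → M
  dom_sub : dom ⊆ A
  maps_to : ∀ a ∈ dom, toFun a ∈ A
  dense_dom : ∀ a ∈ A, a ∈ closure dom
  zero_mem : (0 : M) ∈ dom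
  add_mem : ∀ a ∈ dom, ∀ b ∈ dom, a + b ∈ dom
  smul_mem : ∀ (c : ℂ), ∀ a ∈ dom, c • a ∈ dom
  mul_mem : ∀ a ∈ dom, ∀ x ∈ A, a * x ∈ dom
  map_add' : ∀ a ∈ dom, ∀ b ∈ dom, toFun (a + b) = toFun a + toFun b
  map_smul' : ∀ (c : ℂ), ∀ a ∈ dom, toFun (c • a) = c • toFun a
  map_mul' : ∀ a ∈ dom, ∀ x ∈ A, toFun (a * x) = toFun a * x

namespace AmbientOp

variable {M : Type*} [CStarAlgebra M] {A : Set M}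

/-- The domain of the adjoint `S*`, relative to the algebra `A`. -/
def adjDom (S : AmbientOp M A) : Set M :=
  {a : M | a ∈ A ∧ ∃ c ∈ A, ∀ b ∈ S.dom, star a * S.toFun b = star c * b}

/-- `S` is semiregular if its adjoint is densely defined in `A`. -/
def Semiregular (S : AmbientOp M A) : Prop := ∀ a ∈ A, a ∈ closure S.adjDom

/-- `S` is a closed operator if its graph is closed. -/
def IsClosedOp (S : AmbientOp M A) : Prop :=
  IsClosed {p : M × M | p.1 ∈ S.dom ∧ p.2 = S.toFun p.1}

open Classical in
/-- The value of the adjoint `S*` at `a` (junk value `0` off the adjoint domain). -/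
noncomputable def adjFun (S : AmbientOp M A) (a : M) : M :=
  if h : ∃ c ∈ A, ∀ b ∈ S.dom, star a * S.toFun b = star c * b then h.choose else 0

/-- The domain of the double adjoint `S**`, relative to `A`. -/
def adjDom2 (S : AmbientOp M A) : Set M :=
  {a : M | a ∈ A ∧ ∃ c ∈ A, ∀ b ∈ S.adjDom, star a * S.adjFun b = star c * b}

open Classical in
/-- The value of the double adjoint `S**` at `a`. -/
noncomputable def adjFun2 (S : AmbientOp M A) (a : M) : M :=
  if h : ∃ c ∈ A, ∀ b ∈ S.adjDom, star a * S.adjFun b = star c * b then h.choose else 0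

end AmbientOp

/-- In the standing setup (`S` closed semiregular on `A`, `S|_K` regular with z-transform
`z`), one has `A ⊆ closure((1 - z*z)·A)` and `A ⊆ closure((1 - zz*)·A)`. -/
theorem stmt_14
    {M : Type*} [CStarAlgebra M] [PartialOrder M] [StarOrderedRing M]
    (A : NonUnitalStarSubalgebra ℂ M) (hAc : IsClosed (A : Set M))
    (K : TwoSidedIdeal M) (hKc : IsClosed (K : Set M))
    (hKstar : ∀ k ∈ K, star k ∈ K)
    (hKA : (K : Set M) ⊆ (A : Set M))
    (hKess : ∀ m : M, (∀ k ∈ K, m * k = 0) → m = 0)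
    (S : AmbientOp M (A : Set M)) (hS : S.Semiregular) (hSc : S.IsClosedOp)
    (z : M) (hz : ‖z‖ ≤ 1)
    (hzdense : ∀ k ∈ K, k ∈ closure ((fun x => CFC.sqrt (1 - star z * z) * x) '' K))
    (hzdom : S.dom ∩ (K : Set M) = (fun x => CFC.sqrt (1 - star z * z) * x) '' K)
    (hzact : ∀ k ∈ K, S.toFun (CFC.sqrt (1 - star z * z) * k) = z * k) :
    ∀ a ∈ A, a ∈ closure ((fun x => (1 - star z * z) * x) '' A) ∧
      a ∈ closure ((fun x => (1 - z * star z) * x) '' A) := by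
  intro a ha
  rcases subsingleton_or_nontrivial M with hMs | hMn
  · constructor <;>
    · exact subset_closure ⟨0, A.zero_mem, Subsingleton.elim _ _⟩
  set p : M := 1 - star z * z with hpdef
  set q : M := 1 - z * star z with hqdef
  have hp0 : (0:M) ≤ p := by
    rw [hpdef, sub_nonneg]
    refine (CStarAlgebra.mem_Icc_iff_norm_le_one.mpr ⟨star_mul_self_nonneg z, ?_⟩).2
    rw [CStarRing.norm_star_mul_self]
    exact mul_le_one₀ hz (norm_nonneg z) hz
  have hq0 : (0:M) ≤ q := by
    rw [hqdef, sub_nonneg]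
    refine (CStarAlgebra.mem_Icc_iff_norm_le_one.mpr ⟨mul_star_self_nonneg z, ?_⟩).2
    rw [CStarRing.norm_self_mul_star]
    exact mul_le_one₀ hz (norm_nonneg z) hz
  set w : M := CFC.sqrt p with hwdef
  set w' : M := CFC.sqrt q with hw'def
  have hw2 : w * w = p := CFC.sqrt_mul_sqrt_self p hp0
  have hw'2 : w' * w' = q := CFC.sqrt_mul_sqrt_self q hq0
  have hwsa : IsSelfAdjoint w := IsSelfAdjoint.of_nonneg (CFC.sqrt_nonneg _)
  have hw'sa : IsSelfAdjoint w' := IsSelfAdjoint.of_nonneg (CFC.sqrt_nonneg _)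
  have hcomm : w' * z = z * w := by
    rw [hwdef, hw'def, sqrt_eq_cfc_real hp0, sqrt_eq_cfc_real hq0]
    refine cfc_intertwine z p q (.of_nonneg hp0) (.of_nonneg hq0) ?_ Real.sqrt
      Real.continuous_sqrt
    rw [hpdef, hqdef]; noncomm_ring
  have hcomm' : star z * w' = w * star z := by
    have h := congrArg star hcomm
    rw [star_mul, star_mul, hwsa.star_eq, hw'sa.star_eq] at h
    exact h
  -- key identity: w' * S b = z * b for b in dom S
  have keyB : ∀ b ∈ S.dom, w' * S.toFun b = z * b := by
    intro b hb
    refine sub_eq_zero.mp (hKess _ ?_)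
    intro k hk
    have hbk : b * k ∈ S.dom ∩ (K : Set M) :=
      ⟨S.mul_mem b hb k (hKA hk), K.mul_mem_left b k hk⟩
    rw [hzdom] at hbk
    obtain ⟨k', hk', heq⟩ := hbk
    have heq' : w * k' = b * k := heq
    have h1 : S.toFun (b * k) = S.toFun b * k := S.map_mul' b hb k (hKA hk)
    have h3 : S.toFun b * k = z * k' := by rw [← h1, ← heq', hzact k' hk']
    have h4 : z * (b * k) = z * (w * k') := by rw [heq']
    calc (w' * S.toFun b - z * b) * k
        = w' * (S.toFun b * k) - z * (b * k) := by rw [sub_mul, mul_assoc, mul_assoc]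
      _ = (w' * z) * k' - (z * w) * k' := by rw [h3, h4, mul_assoc, mul_assoc]
      _ = 0 := by rw [hcomm, sub_self]
  -- z A ⊆ closure (w' A)
  have hzA : ∀ x ∈ (A : Set M), z * x ∈ closure ((fun y => w' * y) '' (A : Set M)) := by
    intro x hx
    refine map_mem_closure (continuous_const.mul continuous_id) (S.dense_dom x hx) ?_
    intro b hb
    exact ⟨S.toFun b, S.maps_to b hb, keyB b hb⟩
  -- star z A ⊆ closure (w A)
  have hzsA : ∀ x ∈ (A : Set M), star z * x ∈ closure ((fun y => w * y) '' (A : Set M)) := by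
    intro x hx
    refine map_mem_closure (continuous_const.mul continuous_id) (hS x hx) ?_
    rintro b ⟨hbA, c, hcA, hc⟩
    have hker : ∀ k ∈ K, (star b * z - star c * w) * k = 0 := by
      intro k hk
      have hwk : w * k ∈ S.dom := by
        have hmem : w * k ∈ S.dom ∩ (K : Set M) := by
          rw [hzdom]; exact ⟨k, hk, rfl⟩
        exact hmem.1
      have h5 := hc (w * k) hwk
      rw [hzact k hk] at h5
      calc (star b * z - star c * w) * k = star b * (z * k) - star c * (w * k) := by
            rw [sub_mul, mul_assoc, mul_assoc]
        _ = 0 := by rw [h5, sub_self]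
    have heq : star b * z = star c * w := sub_eq_zero.mp (hKess _ hker)
    refine ⟨c, hcA, ?_⟩
    calc w * c = star w * c := by rw [hwsa.star_eq]
      _ = star (star c * w) := by rw [star_mul, star_star]
      _ = star (star b * z) := by rw [heq]
      _ = star z * b := by rw [star_mul, star_star]
  constructor
  · -- a ∈ closure ((p * ·) '' A)
    have h1 : z * a ∈ closure ((fun y => w' * y) '' (A : Set M)) := hzA a ha
    have h2 : star z * (z * a) ∈
        closure (closure ((fun y => p * y) '' (A : Set M))) := by
      refine map_mem_closure (continuous_const.mul continuous_id) h1 ?_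
      rintro x ⟨a', ha', rfl⟩
      have hrw : star z * (w' * a') = w * (star z * a') := by
        rw [← mul_assoc, hcomm', mul_assoc]
      rw [hrw]
      refine map_mem_closure (continuous_const.mul continuous_id) (hzsA a' ha') ?_
      rintro y ⟨a'', ha'', rfl⟩
      exact ⟨a'', ha'', by rw [← mul_assoc, hw2]⟩
    rw [closure_closure] at h2
    have h3 := map_mem_closure (f := fun y => p * a + y)
      (t := (fun y => p * y) '' (A : Set M)) (continuous_const.add continuous_id) h2 ?_
    · have hfin : (fun y => p * a + y) (star z * (z * a)) = a := by
        show p * a + star z * (z * a) = a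
        rw [hpdef]; noncomm_ring
      rwa [show p * a + star z * (z * a) = a from hfin] at h3
    · rintro y ⟨a', ha', rfl⟩
      exact ⟨a + a', A.add_mem ha ha', by show p * (a + a') = p * a + p * a'; rw [mul_add]⟩
  · -- a ∈ closure ((q * ·) '' A)
    have h1 : star z * a ∈ closure ((fun y => w * y) '' (A : Set M)) := hzsA a ha
    have h2 : z * (star z * a) ∈
        closure (closure ((fun y => q * y) '' (A : Set M))) := by
      refine map_mem_closure (continuous_const.mul continuous_id) h1 ?_
      rintro x ⟨a', ha', rfl⟩
      have hrw : z * (w * a') = w' * (z * a') := by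
        rw [← mul_assoc, ← hcomm, mul_assoc]
      rw [hrw]
      refine map_mem_closure (continuous_const.mul continuous_id) (hzA a' ha') ?_
      rintro y ⟨a'', ha'', rfl⟩
      exact ⟨a'', ha'', by rw [← mul_assoc, hw'2]⟩
    rw [closure_closure] at h2
    have h3 := map_mem_closure (f := fun y => q * a + y)
      (t := (fun y => q * y) '' (A : Set M)) (continuous_const.add continuous_id) h2 ?_
    · have hfin : (fun y => q * a + y) (z * (star z * a)) = a := by
        show q * a + z * (star z * a) = a
        rw [hqdef]; noncomm_ring
      rwa [show q * a + z * (star z * a) = a from hfin] at h3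
    · rintro y ⟨a', ha', rfl⟩
      exact ⟨a + a', A.add_mem ha ha', by show q * (a + a') = q * a + q * a'; rw [mul_add]⟩
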